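/- Let k and n be positive integers with n ≥ k > 1. If there exists a prime p such that n/(k+4) < p ≤ n/k, p > k+4, and p does not divide 3k+8, then S(k,n) is not an integer. -/

import Mathlib

/-- The `k`-th elementary symmetric function of `1, 1/2, …, 1/n`. -/
def S (k n : ℕ) : ℚ :=
  ∑ A ∈ Finset.powersetCard k (Finset.Icc 1 n), ∏ i ∈ A, (1 / (i : ℚ))

/-- The `j`-th elementary symmetric function of `1, 2, …, m` (as a natural number). -/
def Esym (j m : ℕ) : ℕ := ∑ B ∈ Finset.powersetCard j (Finset.Icc 1 m), ∏ i ∈ B, i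

lemma Esym_zero (m : ℕ) : Esym 0 m = 1 := by simp [Esym]

lemma Esym_succ_zero (j : ℕ) : Esym (j+1) 0 = 0 := by simp [Esym]

lemma Esym_rec (j m : ℕ) : Esym (j+1) (m+1) = Esym (j+1) m + (m+1) * Esym j m := by
  have hnot : (m+1) ∉ Finset.Icc 1 m := by simp
  have hins : Finset.Icc 1 (m+1) = insert (m+1) (Finset.Icc 1 m) := by
    ext x; simp [Finset.mem_Icc, Finset.mem_insert]; omega
  rw [Esym, hins, Finset.powersetCard_succ_insert hnot]
  rw [Finset.sum_union]
  · congr 1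
    rw [Finset.sum_image]
    · rw [Esym, Finset.mul_sum]
      refine Finset.sum_congr rfl fun B hB => ?_
      have hB' : (m+1) ∉ B := by
        rw [Finset.mem_powersetCard] at hB
        exact fun hm => hnot (hB.1 hm)
      rw [Finset.prod_insert hB']
    · intro B hB C hC hBC
      rw [Finset.mem_coe, Finset.mem_powersetCard] at hB hC
      have hB' : (m+1) ∉ B := fun hm => hnot (hB.1 hm)
      have hC' : (m+1) ∉ C := fun hm => hnot (hC.1 hm)
      exact (Finset.insert_erase_invOn.2.injOn (by simpa) (by simpa)) hBC
  · rw [Finset.disjoint_left]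
    intro B hB hB'
    rw [Finset.mem_powersetCard] at hB
    simp only [Finset.mem_image] at hB'
    obtain ⟨C, _, rfl⟩ := hB'
    exact hnot (hB.1 (Finset.mem_insert_self _ _))

lemma Esym_one (m : ℕ) : 2 * Esym 1 m = m * (m + 1) := by
  induction m with
  | zero => simp [Esym_succ_zero]
  | succ m ih => rw [Esym_rec, Esym_zero]; ring_nf; ring_nf at ih; omega

lemma Esym_two (m : ℕ) : (24 : ℤ) * Esym 2 m = (m - 1) * m * (m + 1) * (3 * m + 2) := by
  induction m with
  | zero => simp [Esym_succ_zero]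
  | succ m ih =>
    have h1 : 2 * Esym 1 m = m * (m + 1) := Esym_one m
    have h1' : (2 : ℤ) * Esym 1 m = m * (m + 1) := by exact_mod_cast h1
    rw [Esym_rec]
    push_cast
    push_cast at ih
    nlinarith [ih, h1']

lemma Esym_three (m : ℕ) : (48 : ℤ) * Esym 3 m = (m - 2) * (m - 1) * m^2 * (m + 1)^2 := by
  induction m with
  | zero => simp [Esym_succ_zero]
  | succ m ih =>
    have h2 : (24 : ℤ) * Esym 2 m = (m - 1) * m * (m + 1) * (3 * m + 2) := Esym_two m
    rw [Esym_rec]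
    push_cast
    push_cast at ih
    nlinarith [ih, h2]

lemma prod_Icc_cast (m : ℕ) : (∏ i ∈ Finset.Icc 1 m, (i:ℚ)) = ((Nat.factorial m) : ℚ) := by
  rw [← Nat.cast_prod]
  congr 1
  rw [← Finset.Ico_add_one_right_eq_Icc]
  exact Finset.prod_Ico_id_eq_factorial m

lemma S_eq (k m : ℕ) (hkm : k ≤ m) : S k m = (Esym (m - k) m : ℚ) / (Nat.factorial m) := by
  have hcard : (Finset.Icc 1 m).card = m := by rw [Nat.card_Icc]; omega
  rw [S, Esym, Nat.cast_sum, Finset.sum_div]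
  refine Finset.sum_nbij' (fun B => Finset.Icc 1 m \ B) (fun C => Finset.Icc 1 m \ C)
    ?_ ?_ ?_ ?_ ?_
  · intro B hB
    rw [Finset.mem_powersetCard] at hB ⊢
    exact ⟨Finset.sdiff_subset, by rw [Finset.card_sdiff_of_subset hB.1, hcard, hB.2]⟩
  · intro C hC
    rw [Finset.mem_powersetCard] at hC ⊢
    refine ⟨Finset.sdiff_subset, ?_⟩
    rw [Finset.card_sdiff_of_subset hC.1, hcard, hC.2]
    omega
  · intro B hB
    rw [Finset.mem_powersetCard] at hB
    exact Finset.sdiff_sdiff_eq_self hB.1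
  · intro C hC
    rw [Finset.mem_powersetCard] at hC
    exact Finset.sdiff_sdiff_eq_self hC.1
  · intro B hB
    rw [Finset.mem_powersetCard] at hB
    have hne : (∏ i ∈ B, (i:ℚ)) ≠ 0 := by
      refine Finset.prod_ne_zero_iff.mpr fun i hi => ?_
      have := hB.1 hi
      rw [Finset.mem_Icc] at this
      have : (0:ℚ) < i := by exact_mod_cast Nat.lt_of_lt_of_le Nat.zero_lt_one this.1
      exact ne_of_gt this
    have key : (∏ i ∈ Finset.Icc 1 m \ B, (i:ℚ)) * ∏ i ∈ B, (i:ℚ) = ((Nat.factorial m) : ℚ) := by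
      rw [Finset.prod_sdiff hB.1, prod_Icc_cast]
    have hfac : ((Nat.factorial m) : ℚ) ≠ 0 := by positivity
    rw [Finset.prod_div_distrib, Finset.prod_const_one, div_eq_div_iff hne hfac, one_mul, ← key]
    push_cast
    ring

lemma padicNorm_prod {p : ℕ} [Fact p.Prime] {α : Type*} (s : Finset α) (f : α → ℚ) :
    padicNorm p (∏ i ∈ s, f i) = ∏ i ∈ s, padicNorm p (f i) := by
  classical
  induction s using Finset.cons_induction with
  | empty => simp [padicNorm.one]
  | cons a s ha ih => rw [Finset.prod_cons, Finset.prod_cons, padicNorm.mul, ih]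

lemma padicNorm_pow {p : ℕ} [Fact p.Prime] (q : ℚ) (k : ℕ) :
    padicNorm p (q ^ k) = padicNorm p q ^ k := by
  induction k with
  | zero => simp [padicNorm.one]
  | succ k ih => rw [pow_succ, pow_succ, padicNorm.mul, ih]

theorem stmt_3 (k n : ℕ) (hk : 1 < k) (hkn : k ≤ n)
    (h : ∃ p : ℕ, p.Prime ∧ (n : ℚ) / (k + 4) < (p : ℚ) ∧ (p : ℚ) ≤ (n : ℚ) / k ∧
      k + 4 < p ∧ ¬ p ∣ 3 * k + 8) :
    ¬ ∃ z : ℤ, S k n = (z : ℚ) := by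
  classical
  obtain ⟨p, hp, hp1, hp2, hp3, hp4⟩ := h
  haveI : Fact p.Prime := ⟨hp⟩
  have hppos : 0 < p := hp.pos
  set m := n / p with hm
  -- basic bounds
  have hkpos : (0:ℚ) < k := by exact_mod_cast (by omega : 0 < k)
  have hkp_le : k * p ≤ n := by
    have : (k:ℚ) * p ≤ n := by
      rw [mul_comm]
      exact (le_div_iff₀ hkpos).mp hp2
    exact_mod_cast this
  have hkm : k ≤ m := Nat.le_div_iff_mul_le hppos |>.mpr hkp_le
  have hnlt : n < (k + 4) * p := by
    have h4 : (0:ℚ) < (k:ℚ) + 4 := by positivity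
    have : (n:ℚ) < ((k:ℚ) + 4) * p := by
      rw [div_lt_iff₀ h4] at hp1
      linarith
    exact_mod_cast this
  have hmk3 : m ≤ k + 3 := by
    have := Nat.div_lt_iff_lt_mul hppos |>.mpr (by linarith [hnlt] : n < (k+4) * p)
    omega
  have hmp : m < p := by omega
  have hnp2 : n < p * p := by
    calc n < (k + 4) * p := hnlt
    _ ≤ p * p := Nat.mul_le_mul_right p (by omega)
  -- non-divisibility of Esym (m - k) m
  have hple : ∀ a : ℕ, 0 < a → a < p → ¬ p ∣ a := fun a ha hap hd =>
    absurd (Nat.le_of_dvd ha hd) (by omega)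
  have hEnd : ¬ p ∣ Esym (m - k) m := by
    have hj : m - k ≤ 3 := by omega
    intro hdvd
    interval_cases hjc : (m - k)
    · rw [Esym_zero] at hdvd
      exact absurd (Nat.dvd_one.mp hdvd) (by omega)
    · -- m = k + 1
      have hm1 : m = k + 1 := by omega
      have h2 : 2 * Esym 1 m = m * (m + 1) := Esym_one m
      have : p ∣ m * (m + 1) := h2 ▸ Dvd.dvd.mul_left hdvd 2
      rcases (Nat.Prime.dvd_mul hp).mp this with h | h
      · exact hple m (by omega) (by omega) h
      · exact hple (m+1) (by omega) (by omega) h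
    · -- m = k + 2
      have hm1 : m = k + 2 := by omega
      rw [hm1] at hdvd
      have h2 : (24 : ℤ) * Esym 2 (k+2) = (k+1) * (k+2) * (k+3) * (3*k+8) := by
        have := Esym_two (k+2)
        push_cast at this ⊢
        linarith
      have h2' : 24 * Esym 2 (k+2) = (k+1) * ((k+2) * ((k+3) * (3*k+8))) := by
        have : ((24 * Esym 2 (k+2) : ℕ) : ℤ) = (((k+1) * ((k+2) * ((k+3) * (3*k+8))) : ℕ) : ℤ) := by
          push_cast
          linarith [h2]
        exact_mod_cast this
      have hd24 : p ∣ (k+1) * ((k+2) * ((k+3) * (3*k+8))) :=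
        h2' ▸ Dvd.dvd.mul_left hdvd 24
      rcases (Nat.Prime.dvd_mul hp).mp hd24 with h | h
      · exact hple (k+1) (by omega) (by omega) h
      rcases (Nat.Prime.dvd_mul hp).mp h with h | h
      · exact hple (k+2) (by omega) (by omega) h
      rcases (Nat.Prime.dvd_mul hp).mp h with h | h
      · exact hple (k+3) (by omega) (by omega) h
      · exact hp4 h
    · -- m = k + 3
      have hm1 : m = k + 3 := by omega
      rw [hm1] at hdvd
      have h2 : 48 * Esym 3 (k+3) = (k+1) * ((k+2) * ((k+3) * ((k+3) * ((k+4) * (k+4))))) := by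
        have := Esym_three (k+3)
        have : ((48 * Esym 3 (k+3) : ℕ) : ℤ)
            = (((k+1) * ((k+2) * ((k+3) * ((k+3) * ((k+4) * (k+4))))) : ℕ) : ℤ) := by
          push_cast at this ⊢
          linarith [this]
        exact_mod_cast this
      have hd48 : p ∣ (k+1) * ((k+2) * ((k+3) * ((k+3) * ((k+4) * (k+4))))) :=
        h2 ▸ Dvd.dvd.mul_left hdvd 48
      rcases (Nat.Prime.dvd_mul hp).mp hd48 with h | h
      · exact hple (k+1) (by omega) (by omega) h
      rcases (Nat.Prime.dvd_mul hp).mp h with h | h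
      · exact hple (k+2) (by omega) (by omega) h
      rcases (Nat.Prime.dvd_mul hp).mp h with h | h
      · exact hple (k+3) (by omega) (by omega) h
      rcases (Nat.Prime.dvd_mul hp).mp h with h | h
      · exact hple (k+3) (by omega) (by omega) h
      rcases (Nat.Prime.dvd_mul hp).mp h with h | h
      · exact hple (k+4) (by omega) (by omega) h
      · exact hple (k+4) (by omega) (by omega) h
  -- padicNorm of S k m is 1
  have hSm : padicNorm p (S k m) = 1 := by
    rw [S_eq k m hkm, padicNorm.div]
    rw [(padicNorm.nat_eq_one_iff _).mpr hEnd,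
      (padicNorm.nat_eq_one_iff _).mpr (fun hd => absurd ((Nat.Prime.dvd_factorial hp).mp hd) (by omega))]
    norm_num
  -- the multiples of p in Icc 1 n
  have hinj : Function.Injective (· * p) := fun a b hab =>
    Nat.eq_of_mul_eq_mul_right hppos hab
  set emb : ℕ ↪ ℕ := ⟨(· * p), hinj⟩ with hemb
  set P : Finset ℕ := (Finset.Icc 1 m).map emb with hPdef
  have hPsub : P ⊆ Finset.Icc 1 n := by
    intro x hx
    rw [hPdef, Finset.mem_map] at hx
    obtain ⟨j, hj, rfl⟩ := hx
    rw [Finset.mem_Icc] at hj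
    rw [Finset.mem_Icc]
    constructor
    · have := hj.1; simp only [hemb, Function.Embedding.coeFn_mk]; nlinarith
    · simp only [hemb, Function.Embedding.coeFn_mk]
      calc j * p ≤ m * p := Nat.mul_le_mul_right p hj.2
      _ = (n / p) * p := rfl
      _ ≤ n := Nat.div_mul_le_self n p
  have hPmem : ∀ x ∈ Finset.Icc 1 n, (x ∈ P ↔ p ∣ x) := by
    intro x hx
    rw [Finset.mem_Icc] at hx
    rw [hPdef, Finset.mem_map]
    constructor
    · rintro ⟨j, hj, rfl⟩
      exact dvd_mul_left p j
    · rintro ⟨j, rfl⟩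
      refine ⟨j, ?_, by simp [hemb, mul_comm]⟩
      rw [Finset.mem_Icc]
      constructor
      · rcases Nat.eq_zero_or_pos j with rfl | hj
        · omega
        · exact hj
      · rw [hm]
        rw [mul_comm] at hx
        exact Nat.le_div_iff_mul_le hppos |>.mpr hx.2
  -- split the sum
  have hsplit : S k n =
      (∑ B ∈ (Finset.powersetCard k (Finset.Icc 1 n)).filter (· ⊆ P), ∏ i ∈ B, (1 / (i:ℚ)))
      + ∑ B ∈ (Finset.powersetCard k (Finset.Icc 1 n)).filter (¬ · ⊆ P), ∏ i ∈ B, (1 / (i:ℚ)) := by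
    rw [S, Finset.sum_filter_add_sum_filter_not]
  have hfiltP : (Finset.powersetCard k (Finset.Icc 1 n)).filter (· ⊆ P)
      = Finset.powersetCard k P := by
    ext B
    simp only [Finset.mem_filter, Finset.mem_powersetCard]
    constructor
    · rintro ⟨⟨_, hcard⟩, hBP⟩
      exact ⟨hBP, hcard⟩
    · rintro ⟨hBP, hcard⟩
      exact ⟨⟨hBP.trans hPsub, hcard⟩, hBP⟩
  have hfirst : (∑ B ∈ Finset.powersetCard k P, ∏ i ∈ B, (1 / (i:ℚ)))
      = S k m * ((p:ℚ)⁻¹) ^ k := by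
    rw [hPdef, Finset.powersetCard_map, Finset.sum_map, S, Finset.sum_mul]
    refine Finset.sum_congr rfl fun C hC => ?_
    rw [Finset.mem_powersetCard] at hC
    show ∏ i ∈ C.map emb, (1 / (i:ℚ)) = _
    rw [Finset.prod_map]
    simp only [hemb, Function.Embedding.coeFn_mk]
    rw [← hC.2, ← Finset.prod_const ((p:ℚ)⁻¹), ← Finset.prod_mul_distrib]
    refine Finset.prod_congr rfl fun j hj => ?_
    push_cast
    rw [one_div, one_div, mul_inv]
  -- norm of the main part
  have hpQ : (0:ℚ) < (p:ℚ) := by exact_mod_cast hppos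
  have hppow_pos : (0:ℚ) < (p:ℚ) ^ k := by positivity
  have hnormA : padicNorm p (S k m * ((p:ℚ)⁻¹) ^ k) = (p:ℚ) ^ k := by
    rw [padicNorm.mul, hSm, one_mul, padicNorm_pow]
    have : padicNorm p ((p:ℚ)⁻¹) = p := by
      rw [← one_div, padicNorm.div, padicNorm.one, padicNorm.padicNorm_p hp.one_lt]
      simp
    rw [this]
  -- norm of the rest
  have hnormR : padicNorm p
      (∑ B ∈ (Finset.powersetCard k (Finset.Icc 1 n)).filter (¬ · ⊆ P), ∏ i ∈ B, (1 / (i:ℚ)))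
      ≤ (p:ℚ) ^ (k - 1) := by
    have hpQ' : (0:ℚ) ≤ (p:ℚ) := by positivity
    refine padicNorm.sum_le' (fun B hB => ?_) (pow_nonneg hpQ' _)
    rw [Finset.mem_filter, Finset.mem_powersetCard] at hB
    obtain ⟨⟨hBsub, hBcard⟩, hBnot⟩ := hB
    obtain ⟨i₀, hi₀B, hi₀P⟩ := Finset.not_subset.mp hBnot
    have hnorm_le : ∀ i ∈ B, padicNorm p (1 / (i:ℚ)) ≤ p := by
      intro i hi
      have hiIcc := hBsub hi
      rw [Finset.mem_Icc] at hiIcc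
      by_cases hdvd : p ∣ i
      · obtain ⟨j, rfl⟩ := hdvd
        have hjpos : 0 < j := by
          rcases Nat.eq_zero_or_pos j with rfl | hj
          · omega
          · exact hj
        have hjp : j < p := Nat.lt_of_mul_lt_mul_left
          (lt_of_le_of_lt hiIcc.2 hnp2 : p * j < p * p)
        have hv : padicNorm p ((p * j : ℕ) : ℚ) = (p:ℚ)⁻¹ := by
          push_cast
          rw [padicNorm.mul, padicNorm.padicNorm_p hp.one_lt,
            (padicNorm.nat_eq_one_iff _).mpr (hple j hjpos hjp), mul_one]
        rw [padicNorm.div, padicNorm.one, hv, one_div, inv_inv]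
      · rw [padicNorm.div, padicNorm.one,
          (padicNorm.nat_eq_one_iff _).mpr hdvd]
        norm_num
        exact_mod_cast hp.one_le
    have hnorm_i₀ : padicNorm p (1 / (i₀:ℚ)) = 1 := by
      have hiIcc := hBsub hi₀B
      rw [Finset.mem_Icc] at hiIcc
      have hdvd : ¬ p ∣ i₀ := fun hd => hi₀P ((hPmem i₀ (hBsub hi₀B)).mpr hd)
      rw [padicNorm.div, padicNorm.one,
        (padicNorm.nat_eq_one_iff _).mpr hdvd]
      norm_num
    rw [padicNorm_prod, ← Finset.prod_erase_mul _ _ hi₀B, hnorm_i₀, mul_one]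
    calc (∏ i ∈ B.erase i₀, padicNorm p (1 / (i:ℚ)))
        ≤ ∏ i ∈ B.erase i₀, (p:ℚ) := by
          refine Finset.prod_le_prod (fun i _ => padicNorm.nonneg _)
            (fun i hi => hnorm_le i (Finset.mem_of_mem_erase hi))
    _ = (p:ℚ) ^ (k - 1) := by
          rw [Finset.prod_const, Finset.card_erase_of_mem hi₀B, hBcard]
  -- conclude
  have hlt : (p:ℚ) ^ (k - 1) < (p:ℚ) ^ k := by
    have hp1' : (1:ℚ) < p := by exact_mod_cast hp.one_lt
    exact pow_lt_pow_right₀ hp1' (by omega)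
  have hnormS : padicNorm p (S k n) = (p:ℚ) ^ k := by
    rw [hsplit, hfiltP, hfirst]
    rw [padicNorm.add_eq_max_of_ne (by rw [hnormA]; intro heq; rw [← heq] at hnormR; linarith)]
    rw [hnormA]
    exact max_eq_left (le_trans hnormR hlt.le)
  rintro ⟨z, hz⟩
  have := padicNorm.of_int (p := p) z
  rw [← hz, hnormS] at this
  have h1k : (1:ℚ) < (p:ℚ) ^ k := by
    have hp1' : (1:ℚ) < p := by exact_mod_cast hp.one_lt
    exact one_lt_pow₀ hp1' (by omega)
  linarith
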